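/- Let V be a random vector in ℝ^k such that E[VV'] exists and is nonsingular. Then for every sequence (γ_n) in ℝ^k with ‖γ_n‖ → ∞, there exist a point v* in the support of the distribution of V and a subsequence (γ_{n_l}) such that |γ_{n_l}'v*| → ∞ as l → ∞. -/

import Mathlib

open MeasureTheory Filter

noncomputable section

namespace MVR

/-- Lower endpoint of the scale-function domain: `zero` codes `a = 0`, `negInf` codes `a = -∞`. -/
inductive LB | zero | negInf

/-- The domain `(a, ∞)` of the scale function. -/
def LB.dom : LB → Set ℝ
  | LB.zero => Set.Ioi 0
  | LB.negInf => Set.univ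

/-- The filter "t → a from within the domain". -/
def LB.atLB : LB → Filter ℝ
  | LB.zero => nhdsWithin 0 (Set.Ioi 0)
  | LB.negInf => Filter.atBot

/-- Assumption 1: the scale function `s : (a,∞) → (0,∞)` is three times differentiable,
strictly increasing, convex, with `s(t) → 0` as `t → a` and `s(t) → ∞` as `t → ∞`. -/
structure IsScale (A : LB) (s : ℝ → ℝ) : Prop where
  pos : ∀ t ∈ A.dom, 0 < s t
  smooth : ContDiffOn ℝ 3 s A.dom
  mono : StrictMonoOn s A.dom
  convex : ConvexOn ℝ A.dom s
  tendsto_lb : Filter.Tendsto s A.atLB (nhds 0)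
  tendsto_top : Filter.Tendsto s Filter.atTop Filter.atTop

/-- Euclidean inner product on `ℝ^k`. -/
def mdot {k : ℕ} (x y : Fin k → ℝ) : ℝ := ∑ i, x i * y i

/-- Euclidean norm on `ℝ^k`. -/
def ednorm {k : ℕ} (x : Fin k → ℝ) : ℝ := Real.sqrt (∑ i, (x i) ^ 2)

/-- Euclidean norm on `ℝ^k × ℝ^k`. -/
def pnorm {k : ℕ} (θ : (Fin k → ℝ) × (Fin k → ℝ)) : ℝ :=
  Real.sqrt (∑ i, (θ.1 i) ^ 2 + ∑ i, (θ.2 i) ^ 2)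

/-- The vector `(g, 0, …, 0) ∈ ℝ^k`. -/
def lsγ {k : ℕ} [NeZero k] (g : ℝ) : Fin k → ℝ := fun i => if i = 0 then g else 0

/-- Topological support of a measure: points all of whose neighbourhoods have positive measure. -/
def measSupport {α : Type*} [TopologicalSpace α] [MeasurableSpace α] (μ : Measure α) : Set α :=
  {x | ∀ U ∈ nhds x, μ U ≠ 0}

/-- Standard Gaussian density `φ`. -/
def gaussD (z : ℝ) : ℝ := (Real.sqrt (2 * Real.pi))⁻¹ * Real.exp (-(z ^ 2) / 2)

/-- The MVR setting: a probability space carrying `(Y, X)` with `X` having intercept `1`,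
together with a scale function satisfying Assumption 1. -/
structure Setting (k : ℕ) [NeZero k] (Ω : Type*) [MeasurableSpace Ω] where
  P : Measure Ω
  isProb : IsProbabilityMeasure P
  Y : Ω → ℝ
  X : Ω → Fin k → ℝ
  measY : Measurable Y
  measX : Measurable X
  intercept : ∀ᵐ ω ∂P, X ω 0 = 1
  A : LB
  s : ℝ → ℝ
  scale : IsScale A s

namespace Setting

variable {k : ℕ} [NeZero k] {Ω : Type*} [MeasurableSpace Ω] (S : Setting k Ω)

/-- First derivative of the scale function. -/
def s1 : ℝ → ℝ := deriv S.s

/-- Second derivative of the scale function. -/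
def s2 : ℝ → ℝ := deriv (deriv S.s)

/-- Third derivative of the scale function. -/
def s3 : ℝ → ℝ := deriv (deriv (deriv S.s))

/-- The parameter set `Θ_γ = {γ : P[s(X'γ) > 0] = 1}`. -/
def Tγ : Set (Fin k → ℝ) := {γ | ∀ᵐ ω ∂S.P, 0 < S.s (mdot (S.X ω) γ)}

/-- The parameter space `Θ = ℝ^k × Θ_γ`. -/
def T : Set ((Fin k → ℝ) × (Fin k → ℝ)) := Set.univ ×ˢ S.Tγ

/-- Standardized residual `e(Y,X,θ) = (Y − X'β)/s(X'γ)`. -/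
def e (θ : (Fin k → ℝ) × (Fin k → ℝ)) (ω : Ω) : ℝ :=
  (S.Y ω - mdot (S.X ω) θ.1) / S.s (mdot (S.X ω) θ.2)

/-- The MVR loss `L(X,Y,θ) = (1/2){e(Y,X,θ)² + 1}·s(X'γ)`. -/
def L (θ : (Fin k → ℝ) × (Fin k → ℝ)) (ω : Ω) : ℝ :=
  (1 / 2) * ((S.e θ ω) ^ 2 + 1) * S.s (mdot (S.X ω) θ.2)

/-- The MVR objective `Q(θ) = E[L(X,Y,θ)]`. -/
def Q (θ : (Fin k → ℝ) × (Fin k → ℝ)) : ℝ := ∫ ω, S.L θ ω ∂S.P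

/-- The σ-algebra generated by `X`. -/
def mX : MeasurableSpace Ω := MeasurableSpace.comap S.X inferInstance

/-- Conditional mean function `μ(X) = E[Y | X]` (as a function of `ω`). -/
def condMean : Ω → ℝ := S.P[S.Y | S.mX]

/-- Conditional variance function `σ(X)² = E[(Y − E[Y|X])² | X]` (as a function of `ω`). -/
def condVar : Ω → ℝ := S.P[fun ω => (S.Y ω - S.condMean ω) ^ 2 | S.mX]

/-- Conditional standard deviation `σ(X)`. -/
def condSD (ω : Ω) : ℝ := Real.sqrt (S.condVar ω)

/-- Assumption 2: `σ(X)²` is bounded away from `0` (almost surely) on the support of `X`. -/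
def Assm2 : Prop := ∃ c : ℝ, 0 < c ∧ ∀ᵐ ω ∂S.P, c ≤ S.condVar ω

/-- Assumption 3: the moment conditions. -/
def Assm3 : Prop :=
  Integrable (fun ω => (S.Y ω) ^ 4) S.P ∧
  Integrable (fun ω => (ednorm (S.X ω)) ^ 4) S.P ∧
  ∀ γ ∈ S.Tγ,
    Integrable (fun ω => (ednorm (S.X ω)) ^ 4 * (S.s2 (mdot (S.X ω) γ)) ^ 2) S.P ∧
    Integrable (fun ω => (ednorm (S.X ω)) ^ 6 * (S.s3 (mdot (S.X ω) γ)) ^ 2) S.P ∧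
    Integrable (fun ω =>
      (ednorm (S.X ω)) ^ 6 * (S.s1 (mdot (S.X ω) γ)) ^ 2 * (S.s2 (mdot (S.X ω) γ)) ^ 2) S.P

/-- The matrix `E[XX'/s(X'γ)]`. -/
def M (γ : Fin k → ℝ) : Matrix (Fin k) (Fin k) ℝ :=
  Matrix.of fun i j => ∫ ω, S.X ω i * S.X ω j / S.s (mdot (S.X ω) γ) ∂S.P

/-- Assumption 4: `E[XX'/s(X'γ)]` is nonsingular for all `γ ∈ Θ_γ`. -/
def Assm4 : Prop := ∀ γ ∈ S.Tγ, (S.M γ).det ≠ 0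

/-- The restricted (constant-scale) MVR objective defining OLS. -/
def QLS (β : Fin k → ℝ) (g : ℝ) : ℝ :=
  ∫ ω, (1 / 2) * (((S.Y ω - mdot (S.X ω) β) / S.s g) ^ 2 + 1) * S.s g ∂S.P

/-- `(β, g)` is the OLS solution: it minimizes the constant-scale MVR objective over
`Θ_LS = ℝ^k × {g : s(g) > 0}`. -/
def IsOLS (β : Fin k → ℝ) (g : ℝ) : Prop :=
  0 < S.s g ∧ ∀ β' : Fin k → ℝ, ∀ g' : ℝ, 0 < S.s g' → S.QLS β g ≤ S.QLS β' g'

/-- `θ` is the unique minimizer of the MVR objective `Q` over `Θ`. -/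
def IsMVRmin (θ : (Fin k → ℝ) × (Fin k → ℝ)) : Prop :=
  θ ∈ S.T ∧ ∀ θ' ∈ S.T, θ' ≠ θ → S.Q θ < S.Q θ'

/-- The scale function is specified as `s(t) = t` or `s(t) = exp(t)`. -/
def LinOrExp : Prop := (∀ t, S.s t = t) ∨ (∀ t, S.s t = Real.exp t)

/-- The scaled Gaussian density `f_θ(Y,X) = φ(e(Y,X,θ))/s(X'γ)`. -/
def fdens (θ : (Fin k → ℝ) × (Fin k → ℝ)) (ω : Ω) : ℝ :=
  gaussD (S.e θ ω) / S.s (mdot (S.X ω) θ.2)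

/-- The GLS reference density `f†_β(Y,X) = φ((Y−X'β)/σ(X))/σ(X)`. -/
def fdagger (β : Fin k → ℝ) (ω : Ω) : ℝ :=
  gaussD ((S.Y ω - mdot (S.X ω) β) / S.condSD ω) / S.condSD ω

/-- The infeasible MVR objective written in terms of `μ(X)` and `σ(X)²`. -/
def Qtilde (θ : (Fin k → ℝ) × (Fin k → ℝ)) : ℝ :=
  (1 / 2) * ∫ ω, (((S.condMean ω - mdot (S.X ω) θ.1) / S.s (mdot (S.X ω) θ.2)) ^ 2 + 1) *
      S.s (mdot (S.X ω) θ.2) ∂S.P +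
  (1 / 2) * ∫ ω, S.condVar ω / S.s (mdot (S.X ω) θ.2) ∂S.P

/-- The block matrix `Ψ(θ)` of Lemma 2. -/
def Psi (θ : (Fin k → ℝ) × (Fin k → ℝ)) : Matrix (Fin k ⊕ Fin k) (Fin k ⊕ Fin k) ℝ :=
  Matrix.fromBlocks
    (Matrix.of fun i j => ∫ ω, S.X ω i * S.X ω j / S.s (mdot (S.X ω) θ.2) ∂S.P)
    (Matrix.of fun i j => ∫ ω,
      S.X ω i * S.X ω j * S.s1 (mdot (S.X ω) θ.2) * S.e θ ω / S.s (mdot (S.X ω) θ.2) ∂S.P)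
    (Matrix.of fun i j => ∫ ω,
      S.X ω i * S.X ω j * S.s1 (mdot (S.X ω) θ.2) * S.e θ ω / S.s (mdot (S.X ω) θ.2) ∂S.P)
    (Matrix.of fun i j => ∫ ω,
      S.X ω i * S.X ω j * (S.s1 (mdot (S.X ω) θ.2) * S.e θ ω) ^ 2 / S.s (mdot (S.X ω) θ.2) ∂S.P)

end Setting

end MVR

open MVR MVR.Setting

section Aux

lemma aux_ednorm_nonneg {k : ℕ} (x : Fin k → ℝ) : 0 ≤ ednorm x := Real.sqrt_nonneg _

lemma aux_ednorm_zero {k : ℕ} : ednorm (0 : Fin k → ℝ) = 0 := by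
  simp [ednorm]

lemma aux_ednorm_smul {k : ℕ} (c : ℝ) (x : Fin k → ℝ) :
    ednorm (c • x) = |c| * ednorm x := by
  unfold ednorm
  have h : ∑ i, (c • x) i ^ 2 = c ^ 2 * ∑ i, x i ^ 2 := by
    simp [Finset.mul_sum, mul_pow]
  rw [h, Real.sqrt_mul (sq_nonneg c), Real.sqrt_sq_eq_abs]

lemma aux_abs_le_ednorm {k : ℕ} (x : Fin k → ℝ) (i : Fin k) : |x i| ≤ ednorm x := by
  rw [← Real.sqrt_sq_eq_abs]
  exact Real.sqrt_le_sqrt (Finset.single_le_sum (fun j _ => sq_nonneg (x j))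
    (Finset.mem_univ i))

lemma aux_continuous_ednorm {k : ℕ} : Continuous (ednorm (k := k)) := by
  unfold ednorm
  exact Real.continuous_sqrt.comp
    (continuous_finset_sum _ fun i _ => (continuous_apply i).pow 2)

lemma aux_continuous_mdot_left {k : ℕ} (v : Fin k → ℝ) :
    Continuous fun x : Fin k → ℝ => mdot x v := by
  unfold mdot
  exact continuous_finset_sum _ fun i _ => (continuous_apply i).mul continuous_const

lemma aux_measurable_mdot_right {k : ℕ} (w : Fin k → ℝ) :
    Measurable fun v : Fin k → ℝ => mdot w v := by
  unfold mdot
  exact Finset.measurable_sum _ fun i _ => (measurable_pi_apply i).const_mul _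

lemma aux_mdot_smul_left {k : ℕ} (c : ℝ) (x y : Fin k → ℝ) :
    mdot (c • x) y = c * mdot x y := by
  unfold mdot
  rw [Finset.mul_sum]
  refine Finset.sum_congr rfl fun i _ => ?_
  simp [mul_assoc]

end Aux

/-- Lemma 1: if `E[VV']` is nonsingular, then for every sequence `γ_n` with `‖γ_n‖ → ∞` there
exist a support point `v*` of the distribution of `V` and a subsequence along which
`|γ_n'v*| → ∞`. -/
theorem stmt_9 {k : ℕ} {Ω : Type*} [MeasurableSpace Ω] (P : Measure Ω)
    [IsProbabilityMeasure P] (V : Ω → Fin k → ℝ) (hV : Measurable V)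
    (hint : ∀ i j, Integrable (fun ω => V ω i * V ω j) P)
    (hnonsing : (Matrix.of fun i j => ∫ ω, V ω i * V ω j ∂P).det ≠ 0)
    (γ : ℕ → Fin k → ℝ)
    (hγ : Filter.Tendsto (fun n => ednorm (γ n)) Filter.atTop Filter.atTop) :
    ∃ v ∈ measSupport (P.map V), ∃ φ : ℕ → ℕ, StrictMono φ ∧
      Filter.Tendsto (fun l => |mdot (γ (φ l)) v|) Filter.atTop Filter.atTop := by
  classical
  set u : ℕ → Fin k → ℝ := fun n => (ednorm (γ n))⁻¹ • γ n with hu_def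
  -- the normalized sequence lies in the closed unit ball (sup-norm)
  have hub : ∀ n, u n ∈ Metric.closedBall (0 : Fin k → ℝ) 1 := by
    intro n
    rw [Metric.mem_closedBall, dist_zero_right]
    refine (pi_norm_le_iff_of_nonneg zero_le_one).2 fun i => ?_
    rw [Real.norm_eq_abs]
    have h1 : |u n i| ≤ ednorm (u n) := aux_abs_le_ednorm _ i
    have h2 : ednorm (u n) = |(ednorm (γ n))⁻¹| * ednorm (γ n) := aux_ednorm_smul _ _
    have h3 : |(ednorm (γ n))⁻¹| * ednorm (γ n) ≤ 1 := by
      rcases eq_or_ne (ednorm (γ n)) 0 with h | h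
      · simp [h]
      · rw [abs_inv, abs_of_nonneg (aux_ednorm_nonneg _),
          inv_mul_cancel₀ h]
    linarith [h1, h2 ▸ h1]
  obtain ⟨w, -, φ, hφ, hconv⟩ :=
    tendsto_subseq_of_bounded Metric.isBounded_closedBall hub
  have hφtop : Filter.Tendsto φ Filter.atTop Filter.atTop := hφ.tendsto_atTop
  have hpos : ∀ᶠ n in Filter.atTop, 0 < ednorm (γ n) := hγ.eventually_gt_atTop 0
  have hposφ : ∀ᶠ l in Filter.atTop, 0 < ednorm (γ (φ l)) := hφtop.eventually hpos
  -- the limit has euclidean norm 1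
  have hwnorm : ednorm w = 1 := by
    have h1 : Filter.Tendsto (fun l => ednorm (u (φ l))) Filter.atTop (nhds (ednorm w)) :=
      (aux_continuous_ednorm.tendsto w).comp hconv
    have h2 : (fun l => ednorm (u (φ l))) =ᶠ[Filter.atTop] fun _ => (1 : ℝ) := by
      filter_upwards [hposφ] with l hl
      rw [hu_def]
      simp only
      rw [aux_ednorm_smul, abs_inv, abs_of_pos hl, inv_mul_cancel₀ hl.ne']
    exact tendsto_nhds_unique (h1.congr' h2) tendsto_const_nhds
  have hw0 : w ≠ 0 := by
    intro h
    rw [h, aux_ednorm_zero] at hwnorm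
    norm_num at hwnorm
  -- there is a support point not orthogonal to w
  have hkey : ∃ v ∈ measSupport (P.map V), mdot w v ≠ 0 := by
    by_contra hcon
    push_neg at hcon
    set Uset : Set (Fin k → ℝ) := {v | mdot w v ≠ 0} with hUset
    have hUnull : (P.map V) Uset = 0 := by
      refine measure_null_of_locally_null _ fun x hx => ?_
      have hxns : x ∉ measSupport (P.map V) := fun h => hx (hcon x h)
      rw [measSupport] at hxns
      simp only [Set.mem_setOf_eq, not_forall] at hxns
      obtain ⟨N, hN, hN0⟩ := hxns
      push_neg at hN0
      exact ⟨N, nhdsWithin_le_nhds hN, hN0⟩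
    have hUmeas : MeasurableSet Uset := by
      have : Uset = (fun v => mdot w v) ⁻¹' ({0}ᶜ) := by
        ext v; simp [hUset]
      rw [this]
      exact aux_measurable_mdot_right w (measurableSet_singleton 0).compl
    rw [Measure.map_apply hV hUmeas] at hUnull
    have hae : ∀ᵐ ω ∂P, mdot w (V ω) = 0 := by
      rw [ae_iff]
      convert hUnull using 2
      rfl
    -- the moment matrix kills w
    have hcol : ∀ i, ∑ j, (∫ ω, V ω i * V ω j ∂P) * w j = 0 := by
      intro i
      have step1 : ∑ j, (∫ ω, V ω i * V ω j ∂P) * w j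
          = ∑ j, ∫ ω, (V ω i * V ω j) * w j ∂P := by
        refine Finset.sum_congr rfl fun j _ => ?_
        rw [integral_mul_const]
      have step2 : ∑ j, ∫ ω, (V ω i * V ω j) * w j ∂P
          = ∫ ω, ∑ j, (V ω i * V ω j) * w j ∂P :=
        (integral_finset_sum _ fun j _ => (hint i j).mul_const _).symm
      have step3 : ∀ ω, ∑ j, (V ω i * V ω j) * w j = V ω i * mdot w (V ω) := by
        intro ω
        rw [mdot, Finset.mul_sum]
        exact Finset.sum_congr rfl fun j _ => by ring
      rw [step1, step2]
      calc ∫ ω, ∑ j, (V ω i * V ω j) * w j ∂P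
          = ∫ ω, V ω i * mdot w (V ω) ∂P := by
            exact integral_congr_ae (Filter.Eventually.of_forall step3)
        _ = 0 := by
            refine integral_eq_zero_of_ae ?_
            filter_upwards [hae] with ω hω
            simp [hω]
    have hmul : (Matrix.of fun i j => ∫ ω, V ω i * V ω j ∂P).mulVec w = 0 := by
      funext i
      simpa [Matrix.mulVec, dotProduct] using hcol i
    exact hw0 (Matrix.eq_zero_of_mulVec_eq_zero hnonsing hmul)
  obtain ⟨v, hvsupp, hvne⟩ := hkey
  refine ⟨v, hvsupp, φ, hφ, ?_⟩
  have habs : Filter.Tendsto (fun l => |mdot (u (φ l)) v|) Filter.atTop (nhds |mdot w v|) :=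
    ((continuous_abs.comp (aux_continuous_mdot_left v)).tendsto w).comp hconv
  have hγφ : Filter.Tendsto (fun l => ednorm (γ (φ l))) Filter.atTop Filter.atTop :=
    hγ.comp hφtop
  have hmain : Filter.Tendsto (fun l => ednorm (γ (φ l)) * |mdot (u (φ l)) v|)
      Filter.atTop Filter.atTop :=
    hγφ.atTop_mul_pos (abs_pos.2 hvne) habs
  refine hmain.congr' ?_
  filter_upwards [hposφ] with l hl
  have hrec : γ (φ l) = ednorm (γ (φ l)) • u (φ l) := by
    rw [hu_def]
    simp only
    rw [smul_smul, mul_inv_cancel₀ hl.ne', one_smul]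
  have heq : mdot (γ (φ l)) v = ednorm (γ (φ l)) * mdot (u (φ l)) v := by
    conv_lhs => rw [hrec]
    rw [aux_mdot_smul_left]
  rw [heq, abs_mul, abs_of_pos hl]
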